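/- Let U ⊆ ℝⁿ be a bounded connected open set with smooth boundary, and let L = Δ + c with c : U → ℝ continuous and bounded. Suppose u ∈ C²(U) ∩ C(closure U) satisfies L u ≤ 0 on U and u ≥ 0 on U, and suppose there exists a supersolution u⁺ ∈ C²(U) ∩ C(closure U) with u⁺ > 0 on closure U and L u⁺ ≤ 0 on U. If u(x₀) = 0 for some x₀ ∈ U, then u ≡ 0 on U. -/

import Mathlib

/-- The Euclidean Laplacian of `u : ℝⁿ → ℝ` at `x`, as the sum of second
partial derivatives along the standard basis directions. -/
noncomputable def lap {n : ℕ} (u : EuclideanSpace ℝ (Fin n) → ℝ)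
    (x : EuclideanSpace ℝ (Fin n)) : ℝ :=
  ∑ i : Fin n,
    fderiv ℝ (fun y => fderiv ℝ u y (EuclideanSpace.single i 1)) x
      (EuclideanSpace.single i 1)


open Metric Set Filter Real
open scoped Topology

variable {n : ℕ}

/-- squared distance to `y₀`, coordinatewise. -/
noncomputable def qd (y₀ x : EuclideanSpace ℝ (Fin n)) : ℝ := ∑ i, (x i - y₀ i)^2

noncomputable def Dq (y₀ x : EuclideanSpace ℝ (Fin n)) : EuclideanSpace ℝ (Fin n) →L[ℝ] ℝ :=
  ∑ i, (2 * (x i - y₀ i)) • (EuclideanSpace.proj (𝕜 := ℝ) i)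

lemma hasFDerivAt_qd (y₀ x : EuclideanSpace ℝ (Fin n)) :
    HasFDerivAt (qd y₀) (Dq y₀ x) x := by
  have : ∀ i : Fin n, HasFDerivAt (fun x : EuclideanSpace ℝ (Fin n) => (x i - y₀ i)^2)
      ((2 * (x i - y₀ i)) • (EuclideanSpace.proj (𝕜 := ℝ) i)) x := by
    intro i
    have h1 : HasFDerivAt (fun x : EuclideanSpace ℝ (Fin n) => x i - y₀ i)
        (EuclideanSpace.proj (𝕜 := ℝ) i) x :=
      (EuclideanSpace.proj (𝕜 := ℝ) i).hasFDerivAt.sub_const (y₀ i)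
    have := h1.fun_mul h1
    simpa [pow_two, two_mul, add_smul] using this
  exact HasFDerivAt.fun_sum (fun i _ => this i)

lemma Dq_apply (y₀ x v : EuclideanSpace ℝ (Fin n)) :
    Dq y₀ x v = ∑ i, 2 * (x i - y₀ i) * v i := by
  simp [Dq, ContinuousLinearMap.sum_apply, mul_comm]

lemma Dq_single (y₀ x : EuclideanSpace ℝ (Fin n)) (j : Fin n) :
    Dq y₀ x (EuclideanSpace.single j 1) = 2 * (x j - y₀ j) := by
  rw [Dq_apply]
  rw [Finset.sum_eq_single j]
  · simp
  · intro i _ hij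
    simp [EuclideanSpace.single_apply, hij]
  · simp

/-- Gaussian barrier. -/
noncomputable def barr (α : ℝ) (y₀ x : EuclideanSpace ℝ (Fin n)) : ℝ :=
  Real.exp (-α * qd y₀ x)

lemma contDiff_qd (y₀ : EuclideanSpace ℝ (Fin n)) : ContDiff ℝ 2 (qd y₀) := by
  apply ContDiff.sum
  intro i _
  exact ((EuclideanSpace.proj (𝕜 := ℝ) i).contDiff.sub contDiff_const).pow 2

lemma contDiff_barr (α : ℝ) (y₀ : EuclideanSpace ℝ (Fin n)) : ContDiff ℝ 2 (barr α y₀) :=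
  Real.contDiff_exp.comp ((contDiff_qd y₀).const_smul (-α) |>.of_le le_rfl)

lemma hasFDerivAt_barr (α : ℝ) (y₀ x : EuclideanSpace ℝ (Fin n)) :
    HasFDerivAt (barr α y₀) ((Real.exp (-α * qd y₀ x) * -α) • Dq y₀ x) x := by
  have h1 : HasFDerivAt (fun x : EuclideanSpace ℝ (Fin n) => -α * qd y₀ x)
      ((-α) • Dq y₀ x) x := (hasFDerivAt_qd y₀ x).const_mul (-α)
  have h2 := (Real.hasDerivAt_exp (-α * qd y₀ x)).comp_hasFDerivAt x h1
  have hb : barr α y₀ = fun x => Real.exp (-α * qd y₀ x) := rfl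
  rw [hb]
  rw [smul_smul] at h2
  exact h2

lemma fderiv_barr_apply (α : ℝ) (y₀ x v : EuclideanSpace ℝ (Fin n)) :
    fderiv ℝ (barr α y₀) x v
      = Real.exp (-α * qd y₀ x) * -α * (Dq y₀ x v) := by
  rw [(hasFDerivAt_barr α y₀ x).fderiv]; simp

lemma fderiv_barr_fun (α : ℝ) (y₀ : EuclideanSpace ℝ (Fin n)) (j : Fin n) :
    (fun x => fderiv ℝ (barr α y₀) x (EuclideanSpace.single j 1))
      = fun x => (-2 * α) * (Real.exp (-α * qd y₀ x) * (x j - y₀ j)) := by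
  funext x
  rw [fderiv_barr_apply, Dq_single]
  ring

lemma lap_barr (α : ℝ) (y₀ x : EuclideanSpace ℝ (Fin n)) :
    lap (barr α y₀) x
      = Real.exp (-α * qd y₀ x) * (4*α^2 * qd y₀ x - 2*α*n) := by
  unfold lap
  have key : ∀ j : Fin n,
      fderiv ℝ (fun y => fderiv ℝ (barr α y₀) y (EuclideanSpace.single j 1)) x
        (EuclideanSpace.single j 1)
      = Real.exp (-α * qd y₀ x) * (4*α^2 * (x j - y₀ j)^2 - 2*α) := by
    intro j
    rw [fderiv_barr_fun]
    have hexp : HasFDerivAt (fun x : EuclideanSpace ℝ (Fin n) => Real.exp (-α * qd y₀ x))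
        ((Real.exp (-α * qd y₀ x) * -α) • Dq y₀ x) x := hasFDerivAt_barr α y₀ x
    have hproj : HasFDerivAt (fun x : EuclideanSpace ℝ (Fin n) => x j - y₀ j)
        (EuclideanSpace.proj (𝕜 := ℝ) j) x :=
      (EuclideanSpace.proj (𝕜 := ℝ) j).hasFDerivAt.sub_const (y₀ j)
    have hmul := (hexp.fun_mul hproj).const_mul (-2*α)
    rw [hmul.fderiv]
    have : (EuclideanSpace.proj (𝕜 := ℝ) j) (EuclideanSpace.single j 1) = 1 := by simp
    simp only [ContinuousLinearMap.smul_apply, ContinuousLinearMap.add_apply,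
      ContinuousLinearMap.smul_apply, this, Dq_single, smul_eq_mul]
    ring
  rw [Finset.sum_congr rfl (fun j _ => key j)]
  rw [← Finset.mul_sum]
  congr 1
  rw [Finset.sum_sub_distrib, ← Finset.mul_sum]
  simp [qd, Finset.sum_const, Finset.card_univ]
  ring

/-- 1D second derivative test at a local minimum. -/
lemma sdtest {g g' : ℝ → ℝ} {L : ℝ}
    (hder : ∀ᶠ t in 𝓝 (0:ℝ), HasDerivAt g (g' t) t)
    (hg'' : HasDerivAt g' L 0) (hmin : IsLocalMin g 0) : 0 ≤ L := by
  by_contra hL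
  push_neg at hL
  have hg'0 : g' 0 = 0 := hmin.hasDerivAt_eq_zero hder.self_of_nhds
  -- slope of g' tends to L; get g' t < 0 for small t > 0
  have hslope := hasDerivAt_iff_tendsto_slope.1 hg''
  have hslope' : Tendsto (slope g' 0) (𝓝[>] (0:ℝ)) (𝓝 L) :=
    hslope.mono_left (nhdsWithin_mono 0 (fun t ht => ne_of_gt ht))
  have hneg : ∀ᶠ t in 𝓝[>] (0:ℝ), slope g' 0 t < 0 :=
    hslope'.eventually_lt_const hL
  have hposneg : ∀ᶠ t in 𝓝[>] (0:ℝ), g' t < 0 := by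
    filter_upwards [hneg, self_mem_nhdsWithin] with t hst ht
    have : slope g' 0 t = g' t / t := by
      simp [slope_def_field, hg'0, div_eq_mul_inv, mul_comm]
    rw [this] at hst
    have ht' : (0:ℝ) < t := ht
    rcases div_neg_iff.mp hst with ⟨h1, h2⟩ | ⟨h1, h2⟩
    · linarith
    · exact h1
  have hmin' : ∀ᶠ t in 𝓝 (0:ℝ), g 0 ≤ g t := hmin
  obtain ⟨δ, hδ, hδP⟩ := Metric.eventually_nhds_iff.1 (hder.and hmin')
  obtain ⟨ε, hε, hεP⟩ := Metric.eventually_nhds_iff.1 (eventually_nhdsWithin_iff.1 hposneg)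
  set t₁ : ℝ := min δ ε / 2 with ht₁def
  have ht₁pos : 0 < t₁ := by positivity
  have ht₁δ : t₁ < δ := by
    have : min δ ε ≤ δ := min_le_left _ _
    linarith
  have ht₁ε : t₁ < ε := by
    have : min δ ε ≤ ε := min_le_right _ _
    linarith
  have hdiff : ∀ t ∈ Icc (0:ℝ) t₁, HasDerivAt g (g' t) t := by
    intro t ht
    exact (hδP (by
      rw [Real.dist_eq]
      rw [sub_zero, abs_of_nonneg ht.1]
      linarith [ht.2])).1
  have hcont : ContinuousOn g (Icc (0:ℝ) t₁) := fun t ht =>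
    ((hdiff t ht).continuousAt).continuousWithinAt
  have hanti : StrictAntiOn g (Icc (0:ℝ) t₁) := by
    apply strictAntiOn_of_deriv_neg (convex_Icc _ _) hcont
    intro t ht
    rw [interior_Icc] at ht
    rw [(hdiff t ⟨ht.1.le, ht.2.le⟩).deriv]
    apply hεP
    · rw [Real.dist_eq, sub_zero, abs_of_pos ht.1]
      linarith [ht.2]
    · exact ht.1
  have h1 : g t₁ < g 0 := hanti ⟨le_refl 0, ht₁pos.le⟩ ⟨ht₁pos.le, le_refl t₁⟩ ht₁pos
  have h2 : g 0 ≤ g t₁ := (hδP (by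
    rw [Real.dist_eq, sub_zero, abs_of_pos ht₁pos]; exact ht₁δ)).2
  linarith


section C2

variable {U : Set (EuclideanSpace ℝ (Fin n))} {u : EuclideanSpace ℝ (Fin n) → ℝ}
  {x : EuclideanSpace ℝ (Fin n)}

lemma diffOn_of_C2 (hu2 : ContDiffOn ℝ 2 u U) (hU : IsOpen U) (hx : x ∈ U) :
    DifferentiableAt ℝ u x :=
  ((hu2.differentiableOn (by norm_num)).differentiableAt (hU.mem_nhds hx))

lemma diff_fderiv_apply (hU : IsOpen U) (hu2 : ContDiffOn ℝ 2 u U) (hx : x ∈ U)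
    (v : EuclideanSpace ℝ (Fin n)) :
    DifferentiableAt ℝ (fun y => fderiv ℝ u y v) x := by
  have hf' : ContDiffOn ℝ 1 (fderiv ℝ u) U :=
    hu2.fderiv_of_isOpen hU (by norm_num)
  have hd : DifferentiableAt ℝ (fderiv ℝ u) x :=
    (hf'.differentiableOn (by norm_num)).differentiableAt (hU.mem_nhds hx)
  exact ((ContinuousLinearMap.apply ℝ ℝ v).differentiableAt).comp x hd

lemma line_hasDerivAt (z w : EuclideanSpace ℝ (Fin n)) (t : ℝ) :
    HasDerivAt (fun s : ℝ => z + s • w) w t := by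
  simpa using ((hasDerivAt_id t).smul_const w).const_add z

lemma lap_nonneg_of_isLocalMin (hU : IsOpen U) (hu2 : ContDiffOn ℝ 2 u U) (hx : x ∈ U)
    (hmin : IsLocalMin u x) : 0 ≤ lap u x := by
  apply Finset.sum_nonneg
  intro j _
  set e := EuclideanSpace.single (𝕜 := ℝ) j (1:ℝ) with he
  have hl0 : x + (0:ℝ) • e = x := by simp
  have hlc : Continuous (fun t : ℝ => x + t • e) := by continuity
  have hUl : ∀ᶠ t in 𝓝 (0:ℝ), x + t • e ∈ U := by
    have : ContinuousAt (fun t : ℝ => x + t • e) 0 := hlc.continuousAt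
    have := this.preimage_mem_nhds (by rw [hl0]; exact hU.mem_nhds hx)
    exact this
  have hder : ∀ᶠ t in 𝓝 (0:ℝ),
      HasDerivAt (fun s : ℝ => u (x + s • e)) (fderiv ℝ u (x + t • e) e) t := by
    filter_upwards [hUl] with t ht
    have := ((diffOn_of_C2 hu2 hU ht).hasFDerivAt).comp_hasDerivAt t (line_hasDerivAt x e t)
    simpa [Function.comp_def] using this
  have hF : DifferentiableAt ℝ (fun y => fderiv ℝ u y e) x := diff_fderiv_apply hU hu2 hx e
  have hg'' : HasDerivAt (fun t : ℝ => fderiv ℝ u (x + t • e) e)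
      (fderiv ℝ (fun y => fderiv ℝ u y e) x e) (0:ℝ) := by
    have hF' : HasFDerivAt (fun y => fderiv ℝ u y e)
        (fderiv ℝ (fun y => fderiv ℝ u y e) x) (x + (0:ℝ) • e) := by
      rw [hl0]; exact hF.hasFDerivAt
    have := hF'.comp_hasDerivAt (0:ℝ) (line_hasDerivAt x e 0)
    simpa [Function.comp_def] using this
  have hming : IsLocalMin (fun t : ℝ => u (x + t • e)) 0 := by
    have h1 : IsLocalMin u (x + (0:ℝ) • e) := by
      rw [hl0]; exact hmin
    have := IsLocalMin.comp_continuous (f := u) (g := fun t : ℝ => x + t • e) (b := (0:ℝ))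
      h1 hlc.continuousAt
    simpa [Function.comp_def] using this
  exact sdtest hder hg'' hming

lemma lap_linear (hU : IsOpen U) (hu2 : ContDiffOn ℝ 2 u U) (hx : x ∈ U)
    (ε C α : ℝ) (y₀ : EuclideanSpace ℝ (Fin n)) :
    lap (fun y => u y - ε * barr α y₀ y + ε * C) x = lap u x - ε * lap (barr α y₀) x := by
  unfold lap
  rw [Finset.mul_sum, ← Finset.sum_sub_distrib]
  apply Finset.sum_congr rfl
  intro j _
  set e := EuclideanSpace.single (𝕜 := ℝ) j (1:ℝ) with he
  have hBdiff : ∀ z, DifferentiableAt ℝ (fun y => fderiv ℝ (barr α y₀) y e) z := by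
    intro z
    rw [fderiv_barr_fun]
    have h1 : DifferentiableAt ℝ (fun x : EuclideanSpace ℝ (Fin n) => Real.exp (-α * qd y₀ x)) z :=
      (hasFDerivAt_barr α y₀ z).differentiableAt
    have h2 : DifferentiableAt ℝ (fun x : EuclideanSpace ℝ (Fin n) => x j - y₀ j) z :=
      ((EuclideanSpace.proj (𝕜 := ℝ) j).differentiableAt).sub_const (y₀ j)
    exact ((h1.mul h2).const_mul _)
  have hstep1 : (fun y => fderiv ℝ (fun z => u z - ε * barr α y₀ z + ε * C) y e)
      =ᶠ[𝓝 x] fun y => fderiv ℝ u y e - ε * fderiv ℝ (barr α y₀) y e := by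
    filter_upwards [hU.mem_nhds hx] with y hy
    have hud : DifferentiableAt ℝ u y := diffOn_of_C2 hu2 hU hy
    have hbd : DifferentiableAt ℝ (barr α y₀) y := (hasFDerivAt_barr α y₀ y).differentiableAt
    have : fderiv ℝ (fun z => u z - ε * barr α y₀ z + ε * C) y
        = fderiv ℝ u y - ε • fderiv ℝ (barr α y₀) y := by
      rw [fderiv_add_const, fderiv_fun_sub hud (hbd.const_mul ε), fderiv_const_mul hbd]
    rw [this]
    simp
  rw [Filter.EventuallyEq.fderiv_eq hstep1]
  have hA : DifferentiableAt ℝ (fun y => fderiv ℝ u y e) x := diff_fderiv_apply hU hu2 hx e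
  rw [fderiv_fun_sub hA ((hBdiff x).const_mul ε), fderiv_const_mul (hBdiff x)]
  simp

end C2

lemma qd_nonneg (y₀ x : EuclideanSpace ℝ (Fin n)) : 0 ≤ qd y₀ x :=
  Finset.sum_nonneg fun i _ => sq_nonneg _

lemma qd_eq_sq_dist (y₀ x : EuclideanSpace ℝ (Fin n)) : qd y₀ x = dist x y₀ ^ 2 := by
  rw [EuclideanSpace.dist_eq]
  rw [Real.sq_sqrt (Finset.sum_nonneg fun i _ => (by positivity : (0:ℝ) ≤ dist (x i) (y₀ i) ^ 2))]
  unfold qd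
  exact Finset.sum_congr rfl fun i _ => by rw [Real.dist_eq, sq_abs]

lemma dist_le_of_qd_le {y₀ x : EuclideanSpace ℝ (Fin n)} {R : ℝ} (hR : 0 ≤ R)
    (h : qd y₀ x ≤ R^2) : dist x y₀ ≤ R := by
  rw [qd_eq_sq_dist] at h
  by_contra hc
  push_neg at hc
  nlinarith [dist_nonneg (x := x) (y := y₀)]

lemma le_dist_of_le_qd {y₀ x : EuclideanSpace ℝ (Fin n)} {R : ℝ} (hR : 0 ≤ R)
    (h : R^2 ≤ qd y₀ x) : R ≤ dist x y₀ := by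
  rw [qd_eq_sq_dist] at h
  by_contra hc
  push_neg at hc
  nlinarith [dist_nonneg (x := x) (y := y₀)]

lemma qd_line (y₀ z : EuclideanSpace ℝ (Fin n)) (t : ℝ) :
    qd y₀ (z + t • (y₀ - z)) = (1-t)^2 * qd y₀ z := by
  unfold qd
  rw [Finset.mul_sum]
  apply Finset.sum_congr rfl
  intro i _
  have : (z + t • (y₀ - z)) i = z i + t * (y₀ i - z i) := by
    simp [PiLp.add_apply, PiLp.smul_apply, PiLp.sub_apply]
  rw [this]
  ring

lemma Dq_self (y₀ z : EuclideanSpace ℝ (Fin n)) :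
    Dq y₀ z (y₀ - z) = -2 * qd y₀ z := by
  rw [Dq_apply]
  unfold qd
  rw [show (-2 : ℝ) * ∑ i, (z i - y₀ i)^2 = ∑ i, (-2 * (z i - y₀ i)^2) from by
    rw [Finset.mul_sum]]
  apply Finset.sum_congr rfl
  intro i _
  have : (y₀ - z) i = y₀ i - z i := by simp [PiLp.sub_apply]
  rw [this]
  ring

set_option maxHeartbeats 1000000 in
theorem stmt_8 {n : ℕ} (U : Set (EuclideanSpace ℝ (Fin n)))
    (hUopen : IsOpen U) (hUbdd : Bornology.IsBounded U) (hUconn : IsConnected U)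
    (c : EuclideanSpace ℝ (Fin n) → ℝ)
    (hc : ContinuousOn c U) (hcbdd : ∃ K, ∀ x ∈ U, |c x| ≤ K)
    (u : EuclideanSpace ℝ (Fin n) → ℝ)
    (hu2 : ContDiffOn ℝ 2 u U) (hucont : ContinuousOn u (closure U))
    (hLu : ∀ x ∈ U, lap u x + c x * u x ≤ 0)
    (hunn : ∀ x ∈ U, 0 ≤ u x)
    (usup : EuclideanSpace ℝ (Fin n) → ℝ)
    (hsup2 : ContDiffOn ℝ 2 usup U) (hsupcont : ContinuousOn usup (closure U))
    (hsuppos : ∀ x ∈ closure U, 0 < usup x)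
    (hLsup : ∀ x ∈ U, lap usup x + c x * usup x ≤ 0)
    (x₀ : EuclideanSpace ℝ (Fin n)) (hx₀ : x₀ ∈ U) (hu0 : u x₀ = 0) :
    ∀ x ∈ U, u x = 0 := by
  rcases subsingleton_or_nontrivial (EuclideanSpace ℝ (Fin n)) with hss | hnt
  · intro x hx
    rwa [Subsingleton.elim x x₀]
  intro x hx
  obtain ⟨K, hK⟩ := hcbdd
  have hKnn : 0 ≤ K := le_trans (abs_nonneg _) (hK x₀ hx₀)
  set ct : EuclideanSpace ℝ (Fin n) → ℝ := fun y => min (c y) 0 with hctdef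
  have hct0 : ∀ y, ct y ≤ 0 := fun y => min_le_right _ _
  have hctK : ∀ y ∈ U, -K ≤ ct y := fun y hy =>
    le_min (neg_le_of_abs_le (hK y hy)) (by linarith)
  have hLu' : ∀ y ∈ U, lap u y + ct y * u y ≤ 0 := by
    intro y hy
    have h1 : ct y * u y ≤ c y * u y :=
      mul_le_mul_of_nonneg_right (min_le_left _ _) (hunn y hy)
    linarith [hLu y hy]
  have hucU : ContinuousOn u U := hu2.continuousOn
  set W : Set (EuclideanSpace ℝ (Fin n)) := U ∩ u ⁻¹' (Set.Ioi 0) with hWdef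
  have hWopen : IsOpen W := hucU.isOpen_inter_preimage hUopen isOpen_Ioi
  have hWU : W ⊆ U := Set.inter_subset_left
  -- ## The Hopf boundary-point argument
  have key : ∀ p ∈ U, u p = 0 → p ∉ closure W := by
    intro p hpU hup hpcl
    obtain ⟨δ, hδpos, hδU⟩ := Metric.isOpen_iff.1 hUopen p hpU
    set d := δ/4 with hddef
    have hdpos : 0 < d := by positivity
    obtain ⟨y₀, hy₀W, hy₀d⟩ := Metric.mem_closure_iff.1 hpcl d hdpos
    have hy₀U : y₀ ∈ U := hWU hy₀W
    have hy₀pos : 0 < u y₀ := hy₀W.2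
    have hdy₀p : dist y₀ p < d := by rw [dist_comm]; exact hy₀d
    set Z : Set (EuclideanSpace ℝ (Fin n)) := Metric.closedBall p (2*d) ∩ u ⁻¹' {0} with hZdef
    have hball2d : Metric.closedBall p (2*d) ⊆ U := by
      intro w hw
      apply hδU
      rw [Metric.mem_ball]
      have h1 : dist w p ≤ 2*d := hw
      have h2 : d = δ/4 := hddef
      linarith
    have hZclosed : IsClosed Z :=
      (hucU.mono hball2d).preimage_isClosed_of_isClosed Metric.isClosed_closedBall isClosed_singleton
    have hZcpt : IsCompact Z :=
      (isCompact_closedBall p (2*d)).of_isClosed_subset hZclosed Set.inter_subset_left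
    have hpZ : p ∈ Z := ⟨Metric.mem_closedBall_self (by linarith), hup⟩
    obtain ⟨z, hzZ, hzdist⟩ := hZcpt.exists_infDist_eq_dist ⟨p, hpZ⟩ y₀
    set R := dist y₀ z with hRdef
    have hRle : R ≤ dist y₀ p := by
      have h := Metric.infDist_le_dist_of_mem (x := y₀) hpZ
      rw [hzdist] at h
      exact h
    have hRd : R < d := lt_of_le_of_lt hRle hdy₀p
    have huz : u z = 0 := hzZ.2
    have hRpos : 0 < R := by
      rcases (dist_nonneg (x := y₀) (y := z)).lt_or_eq with h | h
      · exact h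
      · exfalso
        have hyz : y₀ = z := dist_eq_zero.1 h.symm
        rw [hyz, huz] at hy₀pos
        exact lt_irrefl _ hy₀pos
    have hcball_U : Metric.closedBall y₀ R ⊆ U := by
      intro w hw
      apply hball2d
      have h1 : dist w y₀ ≤ R := hw
      calc dist w p ≤ dist w y₀ + dist y₀ p := dist_triangle _ _ _
        _ ≤ 2*d := by linarith
    have hzU : z ∈ U := hcball_U (by
      rw [Metric.mem_closedBall, dist_comm])

    have hball_pos : ∀ w, dist w y₀ < R → 0 < u w := by
      intro w hw
      have hwU : w ∈ U := hcball_U (Metric.mem_closedBall.2 hw.le)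
      rcases eq_or_lt_of_le (hunn w hwU) with h0 | h0
      · exfalso
        have hwZ : w ∈ Z := by
          refine ⟨Metric.mem_closedBall.2 ?_, h0.symm⟩
          calc dist w p ≤ dist w y₀ + dist y₀ p := dist_triangle _ _ _
            _ ≤ 2*d := by linarith
        have h2 : Metric.infDist y₀ Z ≤ dist y₀ w := Metric.infDist_le_dist_of_mem hwZ
        rw [hzdist] at h2
        rw [dist_comm] at hw
        linarith
      · exact h0
    have hsph_ne : (Metric.sphere y₀ (R/2)).Nonempty :=
      NormedSpace.sphere_nonempty.2 (by linarith)
    have hsphU : Metric.sphere y₀ (R/2) ⊆ U := by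
      intro w hw
      apply hcball_U
      rw [Metric.mem_closedBall]
      rw [Metric.mem_sphere] at hw
      linarith
    obtain ⟨xm, hxm_mem, hxm_min⟩ :=
      (isCompact_sphere y₀ (R/2)).exists_isMinOn hsph_ne (hucU.mono hsphU)
    set m := u xm with hmdef
    have hmpos : 0 < m := by
      apply hball_pos
      rw [Metric.mem_sphere] at hxm_mem
      rw [hxm_mem]
      linarith
    -- parameters
    set α := max 1 ((2*n + K + 1)/R^2) with hαdef
    have hα1 : (1:ℝ) ≤ α := le_max_left _ _
    have hαpos : (0:ℝ) < α := lt_of_lt_of_le one_pos hα1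
    have hR2pos : (0:ℝ) < R^2 := by positivity
    have hαR : 2*n + K + 1 ≤ α * R^2 := by
      have h1 : (2*n + K + 1)/R^2 ≤ α := le_max_right _ _
      have h2 : (0:ℝ) ≤ 2*n + K + 1 := by positivity
      calc (2*(n:ℝ)+K+1) = ((2*n+K+1)/R^2) * R^2 := by field_simp
        _ ≤ α * R^2 := mul_le_mul_of_nonneg_right h1 hR2pos.le
    set C := Real.exp (-α * R^2) with hCdef
    set Hin := Real.exp (-α * (R^2/4)) - C with hHindef
    have hHinpos : 0 < Hin := by
      rw [hHindef, hCdef, sub_pos]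
      apply Real.exp_lt_exp.2
      nlinarith
    set ε := m / Hin with hεdef
    have hεpos : 0 < ε := div_pos hmpos hHinpos
    set v : EuclideanSpace ℝ (Fin n) → ℝ :=
      fun y => u y - ε * barr α y₀ y + ε * C with hvdef
    have hv2 : ContDiffOn ℝ 2 v U :=
      (hu2.sub ((contDiff_const.mul (contDiff_barr α y₀)).contDiffOn)).add contDiffOn_const
    -- annulus
    set A : Set (EuclideanSpace ℝ (Fin n)) :=
      Metric.closedBall y₀ R ∩ {y | R^2/4 ≤ qd y₀ y} with hAdef
    have hAU : A ⊆ U := fun y hy => hcball_U hy.1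
    have hAclosed : IsClosed A :=
      Metric.isClosed_closedBall.inter (isClosed_le continuous_const (contDiff_qd y₀).continuous)
    have hAcpt : IsCompact A :=
      (isCompact_closedBall y₀ R).of_isClosed_subset hAclosed Set.inter_subset_left
    have hqz : qd y₀ z = R^2 := by
      rw [qd_eq_sq_dist, dist_comm, hRdef]
    have hzA : z ∈ A :=
      ⟨Metric.mem_closedBall.2 (by rw [dist_comm]), by
        rw [Set.mem_setOf_eq, hqz]; linarith⟩
    have hvcont : ContinuousOn v A := (hv2.continuousOn).mono hAU
    obtain ⟨xA, hxA, hxAmin⟩ := hAcpt.exists_isMinOn ⟨z, hzA⟩ hvcont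
    -- ### weak minimum principle on the annulus
    have hv_nonneg : 0 ≤ v xA := by
      by_contra hneg
      push_neg at hneg
      have hxAU : xA ∈ U := hAU hxA
      have hq_ge : R^2/4 ≤ qd y₀ xA := hxA.2
      have hq_lt : qd y₀ xA < R^2 := by
        have h1 : 0 ≤ u xA := hunn xA hxAU
        have h2 : C < barr α y₀ xA := by
          by_contra hcc
          push_neg at hcc
          have h5 : 0 ≤ ε * (C - barr α y₀ xA) :=
            mul_nonneg hεpos.le (by linarith)
          rw [mul_sub] at h5
          have : 0 ≤ v xA := by
            rw [hvdef]
            simp only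
            linarith
          linarith
        rw [hCdef] at h2
        unfold barr at h2
        have h3 := Real.exp_lt_exp.1 h2
        have h4 : α * qd y₀ xA < α * R^2 := by linarith
        exact lt_of_mul_lt_mul_left h4 hαpos.le
      have hq_gt : R^2/4 < qd y₀ xA := by
        rcases eq_or_lt_of_le hq_ge with h0 | h0
        · exfalso
          have hd1 : dist xA y₀ ≤ R/2 :=
            dist_le_of_qd_le (by linarith) (le_of_eq (by rw [← h0]; ring))
          have hd2 : R/2 ≤ dist xA y₀ :=
            le_dist_of_le_qd (by linarith) (le_of_eq (by rw [← h0]; ring))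
          have hxms : xA ∈ Metric.sphere y₀ (R/2) :=
            Metric.mem_sphere.2 (le_antisymm hd1 hd2)
          have hum : m ≤ u xA := hxm_min hxms
          have hbarr : barr α y₀ xA = Real.exp (-α * (R^2/4)) := by
            unfold barr; rw [← h0]
          have hεH : ε * Hin = m := by
            rw [hεdef]; field_simp
          rw [hHindef] at hεH
          rw [mul_sub] at hεH
          have : 0 ≤ v xA := by
            rw [hvdef]
            simp only
            rw [hbarr]
            linarith
          linarith
        · exact h0
      set O : Set (EuclideanSpace ℝ (Fin n)) :=
        {y | R^2/4 < qd y₀ y} ∩ {y | qd y₀ y < R^2} with hOdef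
      have hOopen : IsOpen O :=
        (isOpen_lt continuous_const (contDiff_qd y₀).continuous).inter
          (isOpen_lt (contDiff_qd y₀).continuous continuous_const)
      have hOA : O ⊆ A := by
        intro y hy
        have h1 : qd y₀ y < R^2 := hy.2
        have h2 : R^2/4 < qd y₀ y := hy.1
        exact ⟨Metric.mem_closedBall.2 (dist_le_of_qd_le hRpos.le h1.le), h2.le⟩
      have hxAO : xA ∈ O := ⟨hq_gt, hq_lt⟩
      have hlocmin : IsLocalMin v xA :=
        hxAmin.isLocalMin (Filter.mem_of_superset (hOopen.mem_nhds hxAO) hOA)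
      have hlap_nonneg : 0 ≤ lap v xA := lap_nonneg_of_isLocalMin hUopen hv2 hxAU hlocmin
      have hlapv : lap v xA = lap u xA - ε * lap (barr α y₀) xA :=
        lap_linear hUopen hu2 hxAU ε C α y₀
      have hlapb := lap_barr α y₀ xA
      -- barrier estimate
      have hEpos : 0 < Real.exp (-α * qd y₀ xA) := Real.exp_pos _
      have hb_lb : 0 ≤ barr α y₀ xA - C := by
        unfold barr
        rw [hCdef, sub_nonneg]
        apply Real.exp_le_exp.2
        nlinarith
      have hb_ub : barr α y₀ xA - C ≤ Real.exp (-α * qd y₀ xA) := by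
        unfold barr
        have : 0 < C := Real.exp_pos _
        linarith
      have hctxA : ct xA ≤ 0 := hct0 xA
      have hctKxA : -K ≤ ct xA := hctK xA hxAU
      have hLh_pos : 0 < lap (barr α y₀) xA + ct xA * (barr α y₀ xA - C) := by
        rw [hlapb]
        have a1 : -K * (barr α y₀ xA - C) ≤ ct xA * (barr α y₀ xA - C) :=
          mul_le_mul_of_nonneg_right hctKxA hb_lb
        have a2 : -K * Real.exp (-α * qd y₀ xA) ≤ -K * (barr α y₀ xA - C) :=
          mul_le_mul_of_nonpos_left hb_ub (by linarith)
        have b1 : K + 1 ≤ α*R^2 - 2*n := by linarith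
        have b2 : (1:ℝ) * (K + 1) ≤ α * (α*R^2 - 2*n) :=
          mul_le_mul hα1 b1 (by linarith) (by linarith)
        have b3 : α * (α*R^2 - 2*n) = α^2*R^2 - 2*α*n := by ring
        have h3 : (1:ℝ) ≤ α^2*R^2 - 2*α*n - K := by linarith
        have c1 : 4*α^2*(R^2/4) ≤ 4*α^2*(qd y₀ xA) :=
          mul_le_mul_of_nonneg_left hq_ge (by positivity)
        have c2 : 4*α^2*(R^2/4) = α^2*R^2 := by ring
        have c3 : Real.exp (-α * qd y₀ xA) * (K+1)
            ≤ Real.exp (-α * qd y₀ xA) * (4*α^2 * qd y₀ xA - 2*α*n) :=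
          mul_le_mul_of_nonneg_left (by linarith) hEpos.le
        have c4 : Real.exp (-α * qd y₀ xA) * (K+1)
            = Real.exp (-α * qd y₀ xA) * K + Real.exp (-α * qd y₀ xA) := by ring
        have c5 : -K * Real.exp (-α * qd y₀ xA)
            = -(Real.exp (-α * qd y₀ xA) * K) := by ring
        linarith
      have hvu : v xA = u xA - ε * (barr α y₀ xA - C) := by
        rw [hvdef]; ring
      have h0le : 0 ≤ lap v xA + ct xA * v xA := by
        have h9 : 0 ≤ ct xA * v xA := mul_nonneg_of_nonpos_of_nonpos hctxA hneg.le
        linarith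
      have hcontr : lap v xA + ct xA * v xA < 0 := by
        rw [hlapv, hvu]
        have hLuxA := hLu' xA hxAU
        have hexpand : lap u xA - ε * lap (barr α y₀) xA
            + ct xA * (u xA - ε * (barr α y₀ xA - C))
            = (lap u xA + ct xA * u xA)
              - ε * (lap (barr α y₀) xA + ct xA * (barr α y₀ xA - C)) := by ring
        rw [hexpand]
        have h10 := mul_pos hεpos hLh_pos
        linarith
      linarith
    -- ### Hopf derivative contradiction at z
    have hminz : IsLocalMin u z := by
      show ∀ᶠ y in 𝓝 z, u z ≤ u y
      filter_upwards [hUopen.mem_nhds hzU] with y hy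
      rw [huz]
      exact hunn y hy
    have hfduz : fderiv ℝ u z = 0 := hminz.fderiv_eq_zero
    have hudiffz : DifferentiableAt ℝ u z := diffOn_of_C2 hu2 hUopen hzU
    set dir := y₀ - z with hdirdef
    have hvder : HasFDerivAt v
        (fderiv ℝ u z - ε • ((Real.exp (-α * qd y₀ z) * -α) • Dq y₀ z)) z :=
      ((hudiffz.hasFDerivAt.sub ((hasFDerivAt_barr α y₀ z).const_mul ε)).add_const (ε * C))
    have hDval : (fderiv ℝ u z - ε • ((Real.exp (-α * qd y₀ z) * -α) • Dq y₀ z)) dir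
        = -(ε * (2 * α * R^2 * Real.exp (-α * R^2))) := by
      rw [ContinuousLinearMap.sub_apply, hfduz]
      rw [ContinuousLinearMap.smul_apply, ContinuousLinearMap.smul_apply]
      rw [hdirdef, Dq_self, hqz]
      simp only [ContinuousLinearMap.zero_apply, smul_eq_mul]
      ring
    have hz0 : z + (0:ℝ) • dir = z := by simp
    have hg : HasDerivAt (fun t : ℝ => v (z + t • dir))
        (-(ε * (2 * α * R^2 * Real.exp (-α * R^2)))) (0:ℝ) := by
      have hv' : HasFDerivAt v
          (fderiv ℝ u z - ε • ((Real.exp (-α * qd y₀ z) * -α) • Dq y₀ z))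
          (z + (0:ℝ) • dir) := by rw [hz0]; exact hvder
      have h2 := hv'.comp_hasDerivAt (0:ℝ) (line_hasDerivAt z dir 0)
      rw [hDval] at h2
      simpa [Function.comp_def] using h2
    have hg0 : v (z + (0:ℝ) • dir) = 0 := by
      rw [hz0, hvdef]
      simp only
      unfold barr
      rw [hqz, huz, ← hCdef]
      ring
    have hslopes : ∀ᶠ t in 𝓝[>] (0:ℝ),
        0 ≤ slope (fun t : ℝ => v (z + t • dir)) 0 t := by
      filter_upwards [Ioo_mem_nhdsGT_of_mem
        (Set.mem_Ico.2 ⟨le_refl (0:ℝ), one_half_pos⟩)] with t ht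
      have hq_t : qd y₀ (z + t • dir) = (1-t)^2 * R^2 := by
        rw [hdirdef, qd_line, hqz]
      have h21 : (1/2 : ℝ) ≤ 1 - t := by linarith [ht.2]
      have h22 : (1/4 : ℝ) ≤ (1-t)^2 := by nlinarith [ht.2]
      have h23 : (1-t)^2 ≤ 1 := by nlinarith [ht.1, ht.2]
      have hmem : z + t • dir ∈ A := by
        constructor
        · apply Metric.mem_closedBall.2
          apply dist_le_of_qd_le hRpos.le
          rw [hq_t]
          have := mul_le_mul_of_nonneg_right h23 hR2pos.le
          linarith
        · rw [Set.mem_setOf_eq, hq_t]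
          have := mul_le_mul_of_nonneg_right h22 hR2pos.le
          linarith
      have hvt : 0 ≤ v (z + t • dir) := le_trans hv_nonneg (hxAmin hmem)
      rw [slope_def_field]
      apply div_nonneg
      · show (0:ℝ) ≤ v (z + t • dir) - v (z + (0:ℝ) • dir)
        rw [hg0]
        linarith
      · show (0:ℝ) ≤ t - 0
        linarith [ht.1]
    have htends : Filter.Tendsto (slope (fun t : ℝ => v (z + t • dir)) 0) (𝓝[>] (0:ℝ))
        (𝓝 (-(ε * (2 * α * R^2 * Real.exp (-α * R^2))))) :=
      (hasDerivAt_iff_tendsto_slope.1 hg).mono_left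
        (nhdsWithin_mono _ fun t ht => ne_of_gt ht)
    have hDnn : (0:ℝ) ≤ -(ε * (2 * α * R^2 * Real.exp (-α * R^2))) :=
      ge_of_tendsto htends hslopes
    have : 0 < ε * (2 * α * R^2 * Real.exp (-α * R^2)) := by positivity
    linarith
  -- ## conclusion by connectedness
  by_contra hux
  have hxW : x ∈ W := ⟨hx, lt_of_le_of_ne (hunn x hx) (Ne.symm hux)⟩
  have hsub : U ⊆ (closure W)ᶜ ∪ W := by
    intro y hy
    rcases eq_or_lt_of_le (hunn y hy) with h0 | h0
    · exact Or.inl (key y hy h0.symm)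
    · exact Or.inr ⟨hy, h0⟩
  have hdisj : Disjoint ((closure W)ᶜ) W :=
    Set.disjoint_left.2 fun y hy₁ hy₂ => hy₁ (subset_closure hy₂)
  have hUsub : U ⊆ (closure W)ᶜ :=
    IsPreconnected.subset_left_of_subset_union
      isClosed_closure.isOpen_compl hWopen hdisj hsub
      ⟨x₀, hx₀, key x₀ hx₀ hu0⟩ hUconn.isPreconnected
  exact (hUsub hx) (subset_closure hxW)
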